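/- Let R be a nonzero M×M Hermitian positive semidefinite complex matrix and K ≥ 1. For t > 0 let α(t) ≥ 0 be the unique solution of α = (1/K)·trace( R·(I_M + (t/(1+tα))·R)⁻¹ ), let T(t) = (I_M + (t/(1+tα(t)))·R)⁻¹ and β(t) = [(1/K)·trace(R T(t)²)] / [(1 + tα(t))² − (t²/K)·trace(R T(t) R T(t))]. Then the function ρ ↦ (1/ρ²)·β(1/ρ) is strictly decreasing on (0, ∞). Consequently, for any γ, P_a > 0, the equation (γ/ρ²)·β(1/ρ) = P_a has at most one solution ρ > 0. -/

import Mathlib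

open Matrix ComplexOrder

lemma stmt13_T_eq {n : ℕ} (U : Matrix (Fin n) (Fin n) ℂ) (hU1 : U * Uᴴ = 1) (hU2 : Uᴴ * U = 1)
    (lam : Fin n → ℝ) (c : ℝ) (hlam : ∀ i, (1:ℝ) + c * lam i ≠ 0) :
    ((1 : Matrix (Fin n) (Fin n) ℂ) + (c:ℂ) • (U * diagonal (fun i => (lam i : ℂ)) * Uᴴ))⁻¹
      = U * diagonal (fun i => ((1 + c * lam i : ℝ) : ℂ)⁻¹) * Uᴴ := by
  apply inv_eq_right_inv
  have h1 : (1 : Matrix (Fin n) (Fin n) ℂ) + (c:ℂ) • (U * diagonal (fun i => (lam i : ℂ)) * Uᴴ)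
      = U * diagonal (fun i => ((1 + c * lam i : ℝ) : ℂ)) * Uᴴ := by
    have h2 : (diagonal (fun i => ((1 + c * lam i : ℝ) : ℂ)) : Matrix (Fin n) (Fin n) ℂ)
        = 1 + (c:ℂ) • diagonal (fun i => (lam i : ℂ)) := by
      ext i j
      rcases eq_or_ne i j with rfl | h
      · simp [Matrix.diagonal_apply_eq, Matrix.one_apply_eq]
      · simp [Matrix.diagonal_apply_ne _ h, Matrix.one_apply_ne h]
    rw [h2]
    simp [Matrix.mul_add, Matrix.add_mul, hU1, Matrix.mul_smul, Matrix.smul_mul, mul_assoc]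
  rw [h1, Matrix.mul_assoc, Matrix.mul_assoc]
  rw [show Uᴴ * (U * diagonal (fun i => ((1 + c * lam i : ℝ) : ℂ)⁻¹) * Uᴴ)
      = diagonal (fun i => ((1 + c * lam i : ℝ) : ℂ)⁻¹) * Uᴴ by
    rw [← Matrix.mul_assoc, ← Matrix.mul_assoc, hU2, Matrix.one_mul]]
  rw [← Matrix.mul_assoc (diagonal _), diagonal_mul_diagonal]
  have h3 : (fun i => ((1 + c * lam i : ℝ) : ℂ) * ((1 + c * lam i : ℝ) : ℂ)⁻¹) = fun _ : Fin n => (1:ℂ) := by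
    funext i
    rw [mul_inv_cancel₀]
    exact Complex.ofReal_ne_zero.mpr (hlam i)
  rw [h3, diagonal_one, ← Matrix.mul_assoc, Matrix.mul_one, hU1]

lemma stmt13_conj_mul {n : ℕ} (U : Matrix (Fin n) (Fin n) ℂ) (hU2 : Uᴴ * U = 1)
    (f g : Fin n → ℂ) :
    (U * diagonal f * Uᴴ) * (U * diagonal g * Uᴴ) = U * diagonal (fun i => f i * g i) * Uᴴ := by
  calc (U * diagonal f * Uᴴ) * (U * diagonal g * Uᴴ)
      = U * (diagonal f * ((Uᴴ * U) * (diagonal g * Uᴴ))) := by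
        simp only [Matrix.mul_assoc]
    _ = U * diagonal (fun i => f i * g i) * Uᴴ := by
        rw [hU2, Matrix.one_mul, ← diagonal_mul_diagonal]
        simp only [Matrix.mul_assoc]

lemma stmt13_trace_conj {n : ℕ} (U : Matrix (Fin n) (Fin n) ℂ) (hU2 : Uᴴ * U = 1)
    (f : Fin n → ℂ) : (U * diagonal f * Uᴴ).trace = ∑ i, f i := by
  rw [trace_mul_comm, ← Matrix.mul_assoc, hU2, Matrix.one_mul, trace_diagonal]

lemma stmt13_traces {n : ℕ} (U : Matrix (Fin n) (Fin n) ℂ) (hU1 : U * Uᴴ = 1) (hU2 : Uᴴ * U = 1)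
    (lam : Fin n → ℝ) (c : ℝ) (hlam : ∀ i, (1:ℝ) + c * lam i ≠ 0)
    (R : Matrix (Fin n) (Fin n) ℂ) (hRe : R = U * diagonal (fun i => (lam i : ℂ)) * Uᴴ)
    (T : Matrix (Fin n) (Fin n) ℂ)
    (hTe : T = ((1 : Matrix (Fin n) (Fin n) ℂ) + (c:ℂ) • R)⁻¹) :
    (R * T).trace = ((∑ i, lam i / (1 + c * lam i) : ℝ) : ℂ) ∧
    (R * T * T).trace = ((∑ i, lam i / (1 + c * lam i) ^ 2 : ℝ) : ℂ) ∧
    (R * T * R * T).trace = ((∑ i, (lam i) ^ 2 / (1 + c * lam i) ^ 2 : ℝ) : ℂ) := by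
  have hT' : T = U * diagonal (fun i => ((1 + c * lam i : ℝ) : ℂ)⁻¹) * Uᴴ := by
    rw [hTe, hRe]; exact stmt13_T_eq U hU1 hU2 lam c hlam
  have hRT : R * T = U * diagonal (fun i => (lam i : ℂ) * ((1 + c * lam i : ℝ) : ℂ)⁻¹) * Uᴴ := by
    rw [hRe, hT']; exact stmt13_conj_mul U hU2 _ _
  have hRTT : R * T * T = U * diagonal
      (fun i => (lam i : ℂ) * ((1 + c * lam i : ℝ) : ℂ)⁻¹ * ((1 + c * lam i : ℝ) : ℂ)⁻¹) * Uᴴ := by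
    rw [hRT, hT']; exact stmt13_conj_mul U hU2 _ _
  have hRTR : R * T * R = U * diagonal
      (fun i => (lam i : ℂ) * ((1 + c * lam i : ℝ) : ℂ)⁻¹ * (lam i : ℂ)) * Uᴴ := by
    rw [hRT, hRe]; exact stmt13_conj_mul U hU2 _ _
  have hRTRT : R * T * R * T = U * diagonal
      (fun i => (lam i : ℂ) * ((1 + c * lam i : ℝ) : ℂ)⁻¹ * (lam i : ℂ) *
        ((1 + c * lam i : ℝ) : ℂ)⁻¹) * Uᴴ := by
    rw [hRTR, hT']; exact stmt13_conj_mul U hU2 _ _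
  refine ⟨?_, ?_, ?_⟩
  · rw [hRT, stmt13_trace_conj U hU2]
    push_cast
    refine Finset.sum_congr rfl fun i _ => ?_
    rw [div_eq_mul_inv]
  · rw [hRTT, stmt13_trace_conj U hU2, Complex.ofReal_sum]
    refine Finset.sum_congr rfl fun i _ => ?_
    rw [Complex.ofReal_div, Complex.ofReal_pow, div_eq_mul_inv, sq, mul_inv]; ring
  · rw [hRTRT, stmt13_trace_conj U hU2, Complex.ofReal_sum]
    refine Finset.sum_congr rfl fun i _ => ?_
    rw [Complex.ofReal_div, Complex.ofReal_pow, Complex.ofReal_pow, div_eq_mul_inv, sq, sq,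
      mul_inv]; ring

lemma stmt13_div (p s k N Q : ℝ) (hp : p ≠ 0) (hs : s ≠ 0) (hk : k ≠ 0)
    (hd : 1 - k⁻¹ * Q ≠ 0) :
    1 / p ^ 2 * (1 / k * (s ^ 2 * N) / (s ^ 2 / p ^ 2 * (1 - k⁻¹ * Q))) =
      k⁻¹ * N / (1 - k⁻¹ * Q) := by
  have hnz : s ^ 2 * p ^ 2 * k ≠ 0 := by positivity
  have hkQ : k - Q ≠ 0 := by
    intro h
    apply hd
    have hQk : Q = k := by linarith
    rw [hQk, inv_mul_cancel₀ hk, sub_self]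
  field_simp

set_option maxHeartbeats 1000000 in
/-- for `R` nonzero Hermitian positive semidefinite, with `α(t) ≥ 0` the
solution of the fixed-point equation, `T(t) = (I_M + (t/(1+tα(t))) R)⁻¹` and
`β(t) = [(1/K) tr(R T(t)²)]/[(1+tα(t))² − (t²/K) tr(R T(t) R T(t))]`, the map
`ρ ↦ (1/ρ²) β(1/ρ)` is strictly decreasing on `(0,∞)`; hence for any `γ, P_a > 0` the
equation `(γ/ρ²) β(1/ρ) = P_a` has at most one solution `ρ > 0`. -/
theorem stmt13 {M : ℕ} (R : Matrix (Fin M) (Fin M) ℂ) (hR : R.PosSemidef) (hR0 : R ≠ 0)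
    (K : ℕ) (hK : 1 ≤ K) (α : ℝ → ℝ)
    (hα0 : ∀ t, 0 < t → 0 ≤ α t)
    (hfix : ∀ t, 0 < t → (α t : ℂ) = (K : ℂ)⁻¹ *
      (R * ((1 : Matrix (Fin M) (Fin M) ℂ) + ((t / (1 + t * α t) : ℝ) : ℂ) • R)⁻¹).trace)
    (T : ℝ → Matrix (Fin M) (Fin M) ℂ)
    (hT : ∀ t, T t = ((1 : Matrix (Fin M) (Fin M) ℂ) + ((t / (1 + t * α t) : ℝ) : ℂ) • R)⁻¹)
    (β : ℝ → ℝ)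
    (hβ : ∀ t, β t = ((1 / K) * (R * T t * T t).trace.re) /
      ((1 + t * α t) ^ 2 - (t ^ 2 / K) * (R * T t * R * T t).trace.re)) :
    StrictAntiOn (fun ρ : ℝ => (1 / ρ ^ 2) * β (1 / ρ)) (Set.Ioi 0) ∧
    ∀ γ Pa : ℝ, 0 < γ → 0 < Pa →
      ∀ ρ₁ ∈ Set.Ioi (0 : ℝ), ∀ ρ₂ ∈ Set.Ioi (0 : ℝ),
        (γ / ρ₁ ^ 2) * β (1 / ρ₁) = Pa → (γ / ρ₂ ^ 2) * β (1 / ρ₂) = Pa → ρ₁ = ρ₂ := by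
  have hKpos : (0:ℝ) < (K:ℝ) := by exact_mod_cast hK
  obtain ⟨U, lam, hU1, hU2, hspec, hlam0, j, hj⟩ :
      ∃ (U : Matrix (Fin M) (Fin M) ℂ) (lam : Fin M → ℝ), U * Uᴴ = 1 ∧ Uᴴ * U = 1 ∧
        R = U * diagonal (fun i => (lam i : ℂ)) * Uᴴ ∧ (∀ i, 0 ≤ lam i) ∧ ∃ j, 0 < lam j := by
    have hH : R.IsHermitian := hR.1
    refine ⟨(hH.eigenvectorUnitary : Matrix (Fin M) (Fin M) ℂ), hH.eigenvalues, ?_, ?_, ?_, ?_, ?_⟩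
    · rw [← Matrix.star_eq_conjTranspose]
      exact (Matrix.mem_unitaryGroup_iff).mp (hH.eigenvectorUnitary).2
    · rw [← Matrix.star_eq_conjTranspose]
      exact (Matrix.mem_unitaryGroup_iff').mp (hH.eigenvectorUnitary).2
    · rw [← Matrix.star_eq_conjTranspose]
      exact hH.spectral_theorem
    · exact fun i => hR.eigenvalues_nonneg i
    · by_contra h
      push_neg at h
      have hz : ∀ i, hH.eigenvalues i = 0 := fun i =>
        le_antisymm (h i) (hR.eigenvalues_nonneg i)
      apply hR0
      have hspec' := hH.spectral_theorem
      rw [hspec']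
      have : (RCLike.ofReal ∘ hH.eigenvalues : Fin M → ℂ) = fun _ => (0:ℂ) := by
        funext i; simp [hz i]
      rw [this]
      simp
  -- positive quantities
  have hslam : ∀ s : ℝ, 0 < s → ∀ i, 0 < s + lam i := fun s hs i =>
    add_pos_of_pos_of_nonneg hs (hlam0 i)
  -- key reduction: for each ρ > 0 there is s with the stated properties
  have key : ∀ ρ : ℝ, 0 < ρ → ∃ s : ℝ, 0 < s ∧
      ρ = s * (1 - (K:ℝ)⁻¹ * ∑ i, lam i / (s + lam i)) ∧
      (1 / ρ ^ 2) * β (1 / ρ) =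
        ((K:ℝ)⁻¹ * ∑ i, lam i / (s + lam i) ^ 2) /
          (1 - (K:ℝ)⁻¹ * ∑ i, (lam i) ^ 2 / (s + lam i) ^ 2) := by
    intro ρ hρ
    have ht : (0:ℝ) < 1 / ρ := by positivity
    set t : ℝ := 1 / ρ with htdef
    have ha : 0 ≤ α t := hα0 t ht
    set a : ℝ := α t with hadef
    set s : ℝ := ρ + a with hsdef
    have hs : 0 < s := by rw [hsdef]; linarith
    have hta : (0:ℝ) < 1 + t * a := by
      have : 0 ≤ t * a := mul_nonneg ht.le ha
      linarith
    set c : ℝ := t / (1 + t * a) with hcdef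
    have hc0 : 0 ≤ c := div_nonneg ht.le hta.le
    have hcs : c = s⁻¹ := by
      rw [hcdef, htdef, hsdef]
      field_simp
    have hcl : ∀ i, (1:ℝ) + c * lam i ≠ 0 := fun i =>
      ne_of_gt (add_pos_of_pos_of_nonneg one_pos (mul_nonneg hc0 (hlam0 i)))
    have hone : ∀ i, 1 + c * lam i = (s + lam i) / s := by
      intro i
      rw [hcs]
      field_simp
    obtain ⟨tr1, tr2, tr3⟩ := stmt13_traces U hU1 hU2 lam c hcl R hspec (T t) (hT t)
    -- fixed point in real form
    have hfixt := hfix t ht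
    rw [← hT t, tr1] at hfixt
    have hfixr : a = (K:ℝ)⁻¹ * ∑ i, lam i / (1 + c * lam i) := by
      have : ((a : ℝ) : ℂ) = (((K:ℝ)⁻¹ * ∑ i, lam i / (1 + c * lam i) : ℝ) : ℂ) := by
        rw [hfixt]; push_cast; ring
      exact_mod_cast this
    have hF : a = s * ((K:ℝ)⁻¹ * ∑ i, lam i / (s + lam i)) := by
      rw [hfixr]
      rw [show (∑ i, lam i / (1 + c * lam i)) = ∑ i, s * (lam i / (s + lam i)) by
        refine Finset.sum_congr rfl fun i _ => ?_
        rw [hone i]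
        rw [div_div_eq_mul_div, mul_comm]
        rw [mul_div_assoc]]
      rw [← Finset.mul_sum]
      ring
    have hFlt : (K:ℝ)⁻¹ * ∑ i, lam i / (s + lam i) < 1 := by
      have h1 : s * ((K:ℝ)⁻¹ * ∑ i, lam i / (s + lam i)) < s * 1 := by
        rw [mul_one, ← hF, hsdef]; linarith
      exact lt_of_mul_lt_mul_left h1 hs.le
    refine ⟨s, hs, ?_, ?_⟩
    · have := hF
      rw [mul_sub, mul_one, ← hF, hsdef]; ring
    -- now the value of the function
    · have hQle : ∀ i, (lam i)^2 / (s + lam i)^2 ≤ lam i / (s + lam i) := by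
        intro i
        rw [div_le_div_iff₀ (pow_pos (hslam s hs i) 2) (hslam s hs i)]
        nlinarith [mul_nonneg (mul_nonneg (hlam0 i) hs.le) (hslam s hs i).le]
      have hQlt : (K:ℝ)⁻¹ * ∑ i, (lam i)^2 / (s + lam i)^2 < 1 := by
        refine lt_of_le_of_lt ?_ hFlt
        apply mul_le_mul_of_nonneg_left _ (by positivity)
        exact Finset.sum_le_sum fun i _ => hQle i
      have hdpos : 0 < 1 - (K:ℝ)⁻¹ * ∑ i, (lam i)^2 / (s + lam i)^2 := by linarith
      -- rewrite β
      have hβt := hβ t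
      rw [tr2, tr3, Complex.ofReal_re, Complex.ofReal_re] at hβt
      have hsum2 : (∑ i, lam i / (1 + c * lam i)^2) = s^2 * ∑ i, lam i / (s + lam i)^2 := by
        rw [Finset.mul_sum]
        refine Finset.sum_congr rfl fun i _ => ?_
        rw [hone i, div_pow, div_div_eq_mul_div]
        ring
      have hsum3 : (∑ i, (lam i)^2 / (1 + c * lam i)^2) = s^2 * ∑ i, (lam i)^2 / (s + lam i)^2 := by
        rw [Finset.mul_sum]
        refine Finset.sum_congr rfl fun i _ => ?_
        rw [hone i, div_pow, div_div_eq_mul_div]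
        ring
      have hta' : 1 + t * a = s / ρ := by
        rw [htdef, hsdef]
        field_simp
      rw [hsum2, hsum3, hta'] at hβt
      rw [hβt, htdef]
      have hρ0 : ρ ≠ 0 := ne_of_gt hρ
      have hs0 : s ≠ 0 := ne_of_gt hs
      have hK0 : (K:ℝ) ≠ 0 := ne_of_gt hKpos
      set N : ℝ := ∑ i, lam i / (s + lam i)^2
      set Q : ℝ := ∑ i, (lam i)^2 / (s + lam i)^2
      have hden : (s / ρ)^2 - ((1/ρ)^2 / K) * (s^2 * Q) = (s^2/ρ^2) * (1 - (K:ℝ)⁻¹ * Q) := by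
        field_simp
      rw [hden]
      exact stmt13_div ρ s (K:ℝ) N Q hρ0 hs0 hK0 hdpos.ne'
  -- general elementary facts
  have hQle : ∀ s : ℝ, 0 < s → ∀ i, (lam i)^2 / (s + lam i)^2 ≤ lam i / (s + lam i) := by
    intro s hs i
    rw [div_le_div_iff₀ (pow_pos (hslam s hs i) 2) (hslam s hs i)]
    nlinarith [mul_nonneg (mul_nonneg (hlam0 i) hs.le) (hslam s hs i).le]
  have hDpos : ∀ s : ℝ, 0 < s → (K:ℝ)⁻¹ * (∑ i, lam i / (s + lam i)) < 1 →
      0 < 1 - (K:ℝ)⁻¹ * ∑ i, (lam i)^2 / (s + lam i)^2 := by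
    intro s hs hF
    have : (K:ℝ)⁻¹ * ∑ i, (lam i)^2 / (s + lam i)^2 ≤
        (K:ℝ)⁻¹ * ∑ i, lam i / (s + lam i) := by
      apply mul_le_mul_of_nonneg_left _ (by positivity)
      exact Finset.sum_le_sum fun i _ => hQle s hs i
    linarith
  have hmono : StrictAntiOn (fun ρ : ℝ => (1 / ρ ^ 2) * β (1 / ρ)) (Set.Ioi 0) := by
    intro ρ₁ h1 ρ₂ h2 h12
    rw [Set.mem_Ioi] at h1 h2
    obtain ⟨s₁, hs₁, hfp₁, hval₁⟩ := key ρ₁ h1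
    obtain ⟨s₂, hs₂, hfp₂, hval₂⟩ := key ρ₂ h2
    have hFlt₁ : (K:ℝ)⁻¹ * ∑ i, lam i / (s₁ + lam i) < 1 := by
      have h1' := h1
      rw [hfp₁] at h1'
      nlinarith [h1', hs₁]
    have hFlt₂ : (K:ℝ)⁻¹ * ∑ i, lam i / (s₂ + lam i) < 1 := by
      have h2' := h2
      rw [hfp₂] at h2'
      nlinarith [h2', hs₂]
    -- s₁ < s₂
    have hslt : s₁ < s₂ := by
      by_contra hle
      push_neg at hle
      have hpt : ∀ i, s₁ * (lam i / (s₁ + lam i)) - s₂ * (lam i / (s₂ + lam i))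
          = (s₁ - s₂) * ((lam i)^2 / ((s₂ + lam i) * (s₁ + lam i))) := by
        intro i
        field_simp [(hslam s₁ hs₁ i).ne', (hslam s₂ hs₂ i).ne']
        ring
      have hsumdiff : s₁ * (∑ i, lam i / (s₁ + lam i)) - s₂ * (∑ i, lam i / (s₂ + lam i))
          = (s₁ - s₂) * ∑ i, (lam i)^2 / ((s₂ + lam i) * (s₁ + lam i)) := by
        rw [Finset.mul_sum, Finset.mul_sum, Finset.mul_sum, ← Finset.sum_sub_distrib]
        exact Finset.sum_congr rfl fun i _ => hpt i
      have hW : (K:ℝ)⁻¹ * ∑ i, (lam i)^2 / ((s₂ + lam i) * (s₁ + lam i)) < 1 := by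
        refine lt_of_le_of_lt ?_ hFlt₂
        apply mul_le_mul_of_nonneg_left _ (by positivity)
        refine Finset.sum_le_sum fun i _ => ?_
        rw [div_le_div_iff₀ (mul_pos (hslam s₂ hs₂ i) (hslam s₁ hs₁ i)) (hslam s₂ hs₂ i)]
        nlinarith [mul_nonneg (mul_nonneg (hlam0 i) hs₁.le) (hslam s₂ hs₂ i).le]
      have hge : ρ₂ ≤ ρ₁ := by
        rw [hfp₁, hfp₂]
        have expand : s₁ * (1 - (K:ℝ)⁻¹ * ∑ i, lam i / (s₁ + lam i))
            - s₂ * (1 - (K:ℝ)⁻¹ * ∑ i, lam i / (s₂ + lam i))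
            = (s₁ - s₂) - (K:ℝ)⁻¹ * ((s₁ - s₂) *
              ∑ i, (lam i)^2 / ((s₂ + lam i) * (s₁ + lam i))) := by
          rw [← hsumdiff]; ring
        nlinarith [expand, hW, hle,
          mul_nonneg (sub_nonneg.mpr hle) (sub_nonneg.mpr hW.le)]
      linarith
    -- compare values
    simp only []
    rw [hval₁, hval₂]
    have hN : (K:ℝ)⁻¹ * ∑ i, lam i / (s₂ + lam i)^2
        < (K:ℝ)⁻¹ * ∑ i, lam i / (s₁ + lam i)^2 := by
      apply mul_lt_mul_of_pos_left _ (by positivity)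
      apply Finset.sum_lt_sum
      · intro i _
        rcases eq_or_lt_of_le (hlam0 i) with h0 | h0
        · rw [← h0]; simp
        · rw [div_le_div_iff₀ (pow_pos (hslam s₂ hs₂ i) 2) (pow_pos (hslam s₁ hs₁ i) 2)]
          nlinarith [mul_pos (mul_pos h0 (sub_pos.mpr hslt))
            (by nlinarith [hslam s₁ hs₁ i, hslam s₂ hs₂ i] :
              (0:ℝ) < (s₁ + lam i) + (s₂ + lam i))]
      · refine ⟨j, Finset.mem_univ j, ?_⟩
        rw [div_lt_div_iff₀ (pow_pos (hslam s₂ hs₂ j) 2) (pow_pos (hslam s₁ hs₁ j) 2)]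
        nlinarith [mul_pos (mul_pos hj (sub_pos.mpr hslt))
          (by nlinarith [hslam s₁ hs₁ j, hslam s₂ hs₂ j] :
            (0:ℝ) < (s₁ + lam j) + (s₂ + lam j))]
    have hQmon : (K:ℝ)⁻¹ * ∑ i, (lam i)^2 / (s₂ + lam i)^2
        ≤ (K:ℝ)⁻¹ * ∑ i, (lam i)^2 / (s₁ + lam i)^2 := by
      apply mul_le_mul_of_nonneg_left _ (by positivity)
      refine Finset.sum_le_sum fun i _ => ?_
      rcases eq_or_lt_of_le (hlam0 i) with h0 | h0
      · rw [← h0]; simp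
      · rw [div_le_div_iff₀ (pow_pos (hslam s₂ hs₂ i) 2) (pow_pos (hslam s₁ hs₁ i) 2)]
        nlinarith [mul_pos (mul_pos (pow_pos h0 2) (sub_pos.mpr hslt))
          (by nlinarith [hslam s₁ hs₁ i, hslam s₂ hs₂ i] :
            (0:ℝ) < (s₁ + lam i) + (s₂ + lam i))]
    have hD₁ : 0 < 1 - (K:ℝ)⁻¹ * ∑ i, (lam i)^2 / (s₁ + lam i)^2 := hDpos s₁ hs₁ hFlt₁
    have hD₂ : 0 < 1 - (K:ℝ)⁻¹ * ∑ i, (lam i)^2 / (s₂ + lam i)^2 := hDpos s₂ hs₂ hFlt₂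
    have hD₁₂ : 1 - (K:ℝ)⁻¹ * ∑ i, (lam i)^2 / (s₁ + lam i)^2
        ≤ 1 - (K:ℝ)⁻¹ * ∑ i, (lam i)^2 / (s₂ + lam i)^2 := by linarith
    have hN₁0 : 0 ≤ (K:ℝ)⁻¹ * ∑ i, lam i / (s₁ + lam i)^2 := by
      apply mul_nonneg (by positivity)
      exact Finset.sum_nonneg fun i _ => div_nonneg (hlam0 i) (sq_nonneg _)
    exact div_lt_div₀ hN hD₁₂ hN₁0 hD₁
  refine ⟨hmono, ?_⟩
  intro γ Pa hγ hPa ρ₁ h1 ρ₂ h2 e1 e2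
  by_contra hne
  have harr : ∀ ρ x : ℝ, γ / ρ^2 * x = γ * (1/ρ^2 * x) := by intro ρ x; ring
  rcases lt_or_gt_of_ne hne with h | h
  · have hlt := hmono h1 h2 h
    simp only [] at hlt
    have : γ * (1/ρ₂^2 * β (1/ρ₂)) < γ * (1/ρ₁^2 * β (1/ρ₁)) :=
      mul_lt_mul_of_pos_left hlt hγ
    rw [← harr, ← harr, e1, e2] at this
    exact lt_irrefl _ this
  · have hlt := hmono h2 h1 h
    simp only [] at hlt
    have : γ * (1/ρ₁^2 * β (1/ρ₁)) < γ * (1/ρ₂^2 * β (1/ρ₂)) :=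
      mul_lt_mul_of_pos_left hlt hγ
    rw [← harr, ← harr, e1, e2] at this
    exact lt_irrefl _ this
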